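/- For every x ∈ [0,1]^{F×D} and y ∈ [0,1]^F, MFN(g,x,y) is feasible for every valid partial assignment g if and only if MFN(ĝ,x,y) is feasible for every valid partial assignment ĝ that is integral. -/

import Mathlib

/-!
Formalization of statements from "An LP-rounding approach to capacitated facility location".

`F` is the (finite) type of facilities, `D` the type of clients, `U i` the (positive integer)
capacity of facility `i`.  The multi-commodity flow network `MFN(g, x, y)` has nodes
`j^s, j^t` for clients `j` and `i, i'` for facilities `i`; its arcs and capacities are as in
`MFNArc` / `mfnCap` below.
-/

open scoped BigOperators Classical

/-- Arcs of the multi-commodity flow network `MFN`: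
`mid i` is the arc `(i, i')`, `sx j i` is `(j^s, i)`, `gs i j` is `(i, j^s)`,
and `ft i j` is `(i', j^t)`. -/
inductive MFNArc (F D : Type) where
  | mid : F → MFNArc F D
  | sx  : D → F → MFNArc F D
  | gs  : F → D → MFNArc F D
  | ft  : F → D → MFNArc F D
  deriving DecidableEq, Fintype

/-- Nodes of the multi-commodity flow network `MFN`. -/
inductive MFNNode (F D : Type) where
  | src  : D → MFNNode F D
  | fac  : F → MFNNode F D
  | fac' : F → MFNNode F D
  | sink : D → MFNNode F D
  deriving DecidableEq

variable {F D : Type}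

/-- Tail (start node) of an arc. -/
def MFNArc.tail : MFNArc F D → MFNNode F D
  | .mid i => .fac i
  | .sx j _ => .src j
  | .gs i _ => .fac i
  | .ft i _ => .fac' i

/-- Head (end node) of an arc. -/
def MFNArc.head : MFNArc F D → MFNNode F D
  | .mid i => .fac' i
  | .sx _ i => .fac i
  | .gs _ j => .src j
  | .ft _ j => .sink j

variable [Fintype F] [Fintype D]

/-- Capacity of each arc of `MFN(g, x, y)`; the demand of client `j` is
`d j = 1 - ∑ i, g i j`. -/
noncomputable def mfnCap (U : F → ℕ) (g x : F → D → ℝ) (y : F → ℝ) : MFNArc F D → ℝ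
  | .mid i  => y i * ((U i : ℝ) - ∑ j, g i j)
  | .sx j i => x i j
  | .gs i j => g i j
  | .ft i j => y i * (1 - ∑ i', g i' j)

/-- Net outflow of a (single-commodity) flow `f` at node `v`. -/
noncomputable def netOutflow (f : MFNArc F D → ℝ) (v : MFNNode F D) : ℝ :=
  ∑ a ∈ Finset.univ.filter (fun a : MFNArc F D => a.tail = v), f a -
    ∑ a ∈ Finset.univ.filter (fun a : MFNArc F D => a.head = v), f a

/-- `f = (f_j)_{j ∈ D}` is a feasible multi-commodity flow for `MFN(g, x, y)`:
each `f_j` is nonnegative, conserves flow at every node other than `j^s` and `j^t`,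
has net outflow `d j = 1 - ∑ i, g i j` at `j^s`, and the total flow on every arc is
at most its capacity. -/
def IsFeasibleFlow (U : F → ℕ) (g x : F → D → ℝ) (y : F → ℝ)
    (f : D → MFNArc F D → ℝ) : Prop :=
  (∀ j a, 0 ≤ f j a) ∧
  (∀ (j : D) (v : MFNNode F D), v ≠ MFNNode.src j → v ≠ MFNNode.sink j →
      netOutflow (f j) v = 0) ∧
  (∀ j : D, netOutflow (f j) (MFNNode.src j) = 1 - ∑ i, g i j) ∧
  (∀ a : MFNArc F D, ∑ j, f j a ≤ mfnCap U g x y a)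

/-- The multi-commodity flow network `MFN(g, x, y)` is feasible. -/
def MFNFeasible (U : F → ℕ) (g x : F → D → ℝ) (y : F → ℝ) : Prop :=
  ∃ f : D → MFNArc F D → ℝ, IsFeasibleFlow U g x y f

/-- `g` is a valid partial (fractional) assignment of clients to facilities. -/
def ValidAssign (U : F → ℕ) (g : F → D → ℝ) : Prop :=
  (∀ i j, 0 ≤ g i j) ∧ (∀ j, ∑ i, g i j ≤ 1) ∧ (∀ i, ∑ j, g i j ≤ (U i : ℝ))

-- Auxiliary: linearity of netOutflow
lemma netOutflow_combo (a b : ℝ) (f f' : MFNArc F D → ℝ) (v : MFNNode F D) :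
    netOutflow (fun e => a * f e + b * f' e) v
      = a * netOutflow f v + b * netOutflow f' v := by
  simp only [netOutflow, Finset.sum_add_distrib, ← Finset.mul_sum]
  ring

lemma convex_MFNFeasible (U : F → ℕ) (x : F → D → ℝ) (y : F → ℝ) :
    Convex ℝ {g : F → D → ℝ | MFNFeasible U g x y} := by
  rintro g₁ ⟨f₁, hn₁, hc₁, hs₁, hcap₁⟩ g₂ ⟨f₂, hn₂, hc₂, hs₂, hcap₂⟩ a b ha hb hab
  refine ⟨fun j e => a * f₁ j e + b * f₂ j e, ?_, ?_, ?_, ?_⟩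
  · intro j e
    exact add_nonneg (mul_nonneg ha (hn₁ j e)) (mul_nonneg hb (hn₂ j e))
  · intro j v hv1 hv2
    rw [netOutflow_combo, hc₁ j v hv1 hv2, hc₂ j v hv1 hv2]; ring
  · intro j
    rw [netOutflow_combo, hs₁ j, hs₂ j]
    have h1 : ∑ i, (a • g₁ + b • g₂) i j = a * ∑ i, g₁ i j + b * ∑ i, g₂ i j := by
      simp [Finset.mul_sum, Finset.sum_add_distrib]
    rw [h1]
    have hb' : b = 1 - a := by linarith
    subst hb'
    ring
  · intro e
    have hsum : ∑ j, (a * f₁ j e + b * f₂ j e)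
        = a * ∑ j, f₁ j e + b * ∑ j, f₂ j e := by
      simp [Finset.mul_sum, Finset.sum_add_distrib]
    rw [hsum]
    have h1 := hcap₁ e
    have h2 := hcap₂ e
    have key : a * ∑ j, f₁ j e + b * ∑ j, f₂ j e
        ≤ a * mfnCap U g₁ x y e + b * mfnCap U g₂ x y e :=
      add_le_add (mul_le_mul_of_nonneg_left h1 ha) (mul_le_mul_of_nonneg_left h2 hb)
    refine key.trans (le_of_eq ?_)
    cases e with
    | mid i =>
        simp only [mfnCap, Pi.add_apply, Pi.smul_apply, smul_eq_mul]
        rw [show (∑ j, (a * g₁ i j + b * g₂ i j)) = a * ∑ j, g₁ i j + b * ∑ j, g₂ i j by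
          simp [Finset.mul_sum, Finset.sum_add_distrib]]
        have hb' : b = 1 - a := by linarith
        subst hb'
        ring
    | sx j i =>
        simp only [mfnCap]
        have hb' : b = 1 - a := by linarith
        subst hb'
        ring
    | gs i j =>
        simp [mfnCap]
    | ft i j =>
        simp only [mfnCap, Pi.add_apply, Pi.smul_apply, smul_eq_mul]
        rw [show (∑ i', (a * g₁ i' j + b * g₂ i' j)) = a * ∑ i', g₁ i' j + b * ∑ i', g₂ i' j by
          simp [Finset.mul_sum, Finset.sum_add_distrib]]
        have hb' : b = 1 - a := by linarith
        subst hb'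
        ring


-- Sum over the "slots" sigma type.
lemma sum_slots {U : F → ℕ} (f : (Σ i : F, Fin (U i)) → ℝ) :
    ∑ s : (Σ i : F, Fin (U i)), f s = ∑ i : F, ∑ k : Fin (U i), f ⟨i, k⟩ := by
  rw [← Finset.univ_sigma_univ, Finset.sum_sigma]

lemma sum_slots_const {U : F → ℕ} (f : F → ℝ) :
    ∑ s : (Σ i : F, Fin (U i)), f s.1 = ∑ i : F, (U i : ℝ) * f i := by
  rw [sum_slots]
  simp [Finset.sum_const, mul_comm]

/-- The big doubly stochastic matrix associated to a valid assignment `g`. -/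
noncomputable def bigM (U : F → ℕ) (g : F → D → ℝ) (n : ℝ) :
    Matrix ((Σ i : F, Fin (U i)) ⊕ D) ((Σ i : F, Fin (U i)) ⊕ D) ℝ
  | Sum.inl s, Sum.inl s' => if s' = s then 1 - (∑ j, g s.1 j) / (U s.1 : ℝ) else 0
  | Sum.inl s, Sum.inr j => g s.1 j / (U s.1 : ℝ)
  | Sum.inr _, Sum.inl s => (∑ j, g s.1 j) / (n * (U s.1 : ℝ))
  | Sum.inr _, Sum.inr j => (1 - ∑ i, g i j) / n

/-- Projection from big matrices back to assignments. -/
noncomputable def projMap (U : F → ℕ) :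
    Matrix ((Σ i : F, Fin (U i)) ⊕ D) ((Σ i : F, Fin (U i)) ⊕ D) ℝ →ₗ[ℝ] (F → D → ℝ) where
  toFun M := fun i j => ∑ k : Fin (U i), M (Sum.inl ⟨i, k⟩) (Sum.inr j)
  map_add' A B := by
    funext i j
    simp [Matrix.add_apply, Finset.sum_add_distrib]
  map_smul' c A := by
    funext i j
    simp [Matrix.smul_apply, Finset.mul_sum]

set_option maxHeartbeats 1000000 in
lemma projMap_permMatrix_mem (U : F → ℕ) (σ : Equiv.Perm ((Σ i : F, Fin (U i)) ⊕ D)) :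
    projMap (D := D) U (σ.permMatrix ℝ)
      ∈ {h : F → D → ℝ | ValidAssign U h ∧ ∀ i j, h i j = 0 ∨ h i j = 1} := by
  have hentry : ∀ a c : (Σ i : F, Fin (U i)) ⊕ D,
      σ.permMatrix ℝ a c = if σ a = c then (1 : ℝ) else 0 := by
    intro a c
    simp [Equiv.Perm.permMatrix, PEquiv.toMatrix_apply, Equiv.toPEquiv_apply, Option.mem_def]
  have hval : ∀ (i : F) (j : D),
      projMap (D := D) U (σ.permMatrix ℝ) i j
        = ∑ k : Fin (U i), if σ (Sum.inl ⟨i, k⟩) = Sum.inr j then (1 : ℝ) else 0 := by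
    intro i j
    simp only [projMap, LinearMap.coe_mk, AddHom.coe_mk]
    exact Finset.sum_congr rfl fun k _ => hentry _ _
  have hinner01 : ∀ (i : F) (j : D),
      (∑ k : Fin (U i), if σ (Sum.inl ⟨i, k⟩) = Sum.inr j then (1 : ℝ) else 0) = 0 ∨
      (∑ k : Fin (U i), if σ (Sum.inl ⟨i, k⟩) = Sum.inr j then (1 : ℝ) else 0) = 1 := by
    intro i j
    rw [Finset.sum_boole]
    have hle : (Finset.univ.filter
        (fun k : Fin (U i) => σ (Sum.inl ⟨i, k⟩) = Sum.inr j)).card ≤ 1 := by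
      refine Finset.card_le_one.2 fun a ha b hb => ?_
      simp only [Finset.mem_filter] at ha hb
      have := σ.injective (ha.2.trans hb.2.symm)
      simpa using this
    interval_cases h : (Finset.univ.filter
        (fun k : Fin (U i) => σ (Sum.inl ⟨i, k⟩) = Sum.inr j)).card
    · exact Or.inl (by norm_num)
    · exact Or.inr (by norm_num)
  refine ⟨⟨?_, ?_, ?_⟩, ?_⟩
  · -- nonneg
    intro i j
    rw [hval]
    exact Finset.sum_nonneg fun k _ => by positivity
  · -- column sums ≤ 1
    intro j
    have : ∑ i : F, projMap (D := D) U (σ.permMatrix ℝ) i j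
        = ∑ s : (Σ i : F, Fin (U i)), if σ (Sum.inl s) = Sum.inr j then (1 : ℝ) else 0 := by
      calc ∑ i : F, projMap (D := D) U (σ.permMatrix ℝ) i j
          = ∑ i : F, ∑ k : Fin (U i),
              (if σ (Sum.inl ⟨i, k⟩) = Sum.inr j then (1 : ℝ) else 0) :=
            Finset.sum_congr rfl fun i _ => hval i j
        _ = _ := (sum_slots (fun s => if σ (Sum.inl s) = Sum.inr j then (1 : ℝ) else 0)).symm
    rw [this, Finset.sum_boole]
    have hle : (Finset.univ.filter
        (fun s : (Σ i : F, Fin (U i)) => σ (Sum.inl s) = Sum.inr j)).card ≤ 1 := by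
      refine Finset.card_le_one.2 fun a ha b hb => ?_
      simp only [Finset.mem_filter] at ha hb
      have := σ.injective (ha.2.trans hb.2.symm)
      simpa using this
    exact_mod_cast hle
  · -- row sums ≤ U i
    intro i
    have hswap : ∑ j : D, projMap (D := D) U (σ.permMatrix ℝ) i j
        = ∑ k : Fin (U i), ∑ j : D, if σ (Sum.inl ⟨i, k⟩) = Sum.inr j then (1 : ℝ) else 0 := by
      rw [Finset.sum_congr rfl fun j _ => hval i j, Finset.sum_comm]
    rw [hswap]
    calc ∑ k : Fin (U i), ∑ j : D, (if σ (Sum.inl ⟨i, k⟩) = Sum.inr j then (1 : ℝ) else 0)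
        ≤ ∑ _k : Fin (U i), (1 : ℝ) := by
          refine Finset.sum_le_sum fun k _ => ?_
          rcases hcase : σ (Sum.inl ⟨i, k⟩) with a | j₀
          · simp [hcase]
          · simp [hcase, Sum.inr.injEq, Finset.sum_ite_eq]
      _ = (U i : ℝ) := by simp
  · -- integrality
    intro i j
    rw [hval]
    exact hinner01 i j

set_option maxHeartbeats 1000000 in
lemma bigM_mem_doublyStochastic (U : F → ℕ) (hU : ∀ i, 0 < U i) (g : F → D → ℝ)
    (hg : ValidAssign U g) [Nonempty D] :
    bigM (D := D) U g (Fintype.card D : ℝ) ∈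
      doublyStochastic ℝ ((Σ i : F, Fin (U i)) ⊕ D) := by
  obtain ⟨hg0, hgc, hgr⟩ := hg
  set n : ℝ := (Fintype.card D : ℝ) with hn
  have hn0 : (0 : ℝ) < n := by
    rw [hn]; exact_mod_cast Fintype.card_pos
  have hU0 : ∀ i, (0 : ℝ) < (U i : ℝ) := fun i => by exact_mod_cast hU i
  have hne : n ≠ 0 := hn0.ne'
  have hUne : ∀ i, (U i : ℝ) ≠ 0 := fun i => (hU0 i).ne'
  have hS0 : ∀ i, (0 : ℝ) ≤ ∑ j, g i j := fun i => Finset.sum_nonneg fun j _ => hg0 i j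
  have hcol0 : ∀ j, (0 : ℝ) ≤ ∑ i, g i j := fun j => Finset.sum_nonneg fun i _ => hg0 i j
  rw [mem_doublyStochastic_iff_sum]
  refine ⟨?_, ?_, ?_⟩
  · rintro (s | l) (s' | j)
    · simp only [bigM]
      split
      · have h := (div_le_one (hU0 s.1)).2 (hgr s.1)
        linarith
      · exact le_refl 0
    · exact div_nonneg (hg0 s.1 j) (hU0 s.1).le
    · exact div_nonneg (hS0 s'.1) (by positivity)
    · exact div_nonneg (by have h := hgc j; linarith) hn0.le
  · rintro (s | l)
    · rw [Fintype.sum_sum_type]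
      simp only [bigM]
      rw [Finset.sum_ite_eq' Finset.univ s, ← Finset.sum_div]
      simp
    · rw [Fintype.sum_sum_type]
      simp only [bigM]
      rw [sum_slots_const (U := U) (fun i => (∑ j, g i j) / (n * (U i : ℝ)))]
      have h1 : ∀ i : F, (U i : ℝ) * ((∑ j, g i j) / (n * (U i : ℝ)))
          = (∑ j, g i j) / n := by
        intro i
        rw [← div_div, mul_comm]
        exact div_mul_cancel₀ _ (hUne i)
      rw [Finset.sum_congr rfl fun i _ => h1 i]
      have h2 : ∑ j : D, (1 - ∑ i, g i j) / n = (n - ∑ j : D, ∑ i : F, g i j) / n := by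
        rw [← Finset.sum_div, Finset.sum_sub_distrib]
        simp [hn]
      rw [h2, ← Finset.sum_div, Finset.sum_comm]
      rw [← add_div]
      field_simp
      ring
  · rintro (s | j)
    · rw [Fintype.sum_sum_type]
      simp only [bigM]
      rw [Finset.sum_ite_eq Finset.univ s, Finset.sum_const]
      simp only [Finset.card_univ, nsmul_eq_mul, Finset.mem_univ, if_true]
      have : (Fintype.card D : ℝ) * ((∑ j, g s.1 j) / (n * (U s.1 : ℝ)))
          = (∑ j, g s.1 j) / (U s.1 : ℝ) := by
        rw [← hn, mul_comm n ((U s.1 : ℝ)), ← div_div, mul_comm]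
        exact div_mul_cancel₀ _ hne
      rw [this]
      ring
    · rw [Fintype.sum_sum_type]
      simp only [bigM]
      rw [sum_slots_const (U := U) (fun i => g i j / (U i : ℝ))]
      have h1 : ∀ i : F, (U i : ℝ) * (g i j / (U i : ℝ)) = g i j := by
        intro i; rw [mul_comm]; exact div_mul_cancel₀ _ (hUne i)
      rw [Finset.sum_congr rfl fun i _ => h1 i, Finset.sum_const]
      simp only [Finset.card_univ, nsmul_eq_mul]
      have : (Fintype.card D : ℝ) * ((1 - ∑ i, g i j) / n) = 1 - ∑ i, g i j := by
        rw [← hn, mul_comm]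
        exact div_mul_cancel₀ _ hne
      rw [this]
      ring

lemma mem_hull_of_valid (U : F → ℕ) (hU : ∀ i, 0 < U i) (g : F → D → ℝ)
    (hg : ValidAssign U g) :
    g ∈ convexHull ℝ {h : F → D → ℝ | ValidAssign U h ∧ ∀ i j, h i j = 0 ∨ h i j = 1} := by
  cases isEmpty_or_nonempty D with
  | inl hD =>
      exact subset_convexHull ℝ _ ⟨hg, fun i j => isEmptyElim j⟩
  | inr hD =>
      have hM : bigM (D := D) U g (Fintype.card D : ℝ) ∈
          convexHull ℝ {P | ∃ σ : Equiv.Perm ((Σ i : F, Fin (U i)) ⊕ D),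
            σ.permMatrix ℝ = P} := by
        rw [← doublyStochastic_eq_convexHull_permMatrix]
        exact bigM_mem_doublyStochastic U hU g hg
      have hπM : projMap (D := D) U (bigM (D := D) U g (Fintype.card D : ℝ)) = g := by
        funext i j
        simp only [projMap, LinearMap.coe_mk, AddHom.coe_mk, bigM]
        rw [Finset.sum_const]
        simp only [Finset.card_univ, Fintype.card_fin, nsmul_eq_mul]
        have : (U i : ℝ) ≠ 0 := by exact_mod_cast (hU i).ne'
        field_simp
      have himg : g ∈ (projMap (D := D) U) ''
          (convexHull ℝ {P | ∃ σ : Equiv.Perm ((Σ i : F, Fin (U i)) ⊕ D),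
            σ.permMatrix ℝ = P}) := ⟨_, hM, hπM⟩
      rw [LinearMap.image_convexHull] at himg
      refine convexHull_mono ?_ himg
      rintro _ ⟨P, ⟨σ, rfl⟩, rfl⟩
      exact projMap_permMatrix_mem U σ

/-- `MFN(g, x, y)` is feasible for every valid partial assignment `g`
iff it is feasible for every valid partial assignment that is integral. -/
theorem stmt_0 (U : F → ℕ) (hU : ∀ i, 0 < U i)
    (x : F → D → ℝ) (y : F → ℝ)
    (hx : ∀ i j, 0 ≤ x i j ∧ x i j ≤ 1) (hy : ∀ i, 0 ≤ y i ∧ y i ≤ 1) :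
    (∀ g : F → D → ℝ, ValidAssign U g → MFNFeasible U g x y) ↔
      (∀ g : F → D → ℝ, ValidAssign U g → (∀ i j, g i j = 0 ∨ g i j = 1) →
        MFNFeasible U g x y) := by
  constructor
  · intro h g hg _
    exact h g hg
  · intro h g hg
    have hmem := mem_hull_of_valid U hU g hg
    have hsub : {h' : F → D → ℝ | ValidAssign U h' ∧ ∀ i j, h' i j = 0 ∨ h' i j = 1}
        ⊆ {g : F → D → ℝ | MFNFeasible U g x y} := fun h' hh' => h h' hh'.1 hh'.2
    exact convexHull_min hsub (convex_MFNFeasible U x y) hmem
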